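/- arXiv:0806.3010 — 6 statements merged into one kernel-verified Lean document; each statement's English description precedes it below -/
import Mathlib

section
/- The symmetric bilinear form on ℤ² given by the matrix [[-2n - m n², 1], [1, -1]] is not isomorphic (as a bilinear form over ℤ) to the form given by [[-2n - m n², -1 - m n], [-1 - m n, -1 - m]], for any integers m ≥ 1 and n ≥ 2. -/
open Matrix

lemma small_aux (a c x : ℤ) (h0 : c ≠ 0) (h1 : |c| < a) (h : a * x = c) : False := by
  have ha : 0 < a := (abs_nonneg c).trans_lt h1
  have hx : x ≠ 0 := by rintro rfl; simp at h; exact h0 h.symm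
  have hxx : 1 ≤ |x| := Int.one_le_abs hx
  have h2 : a ≤ |c| := by
    rw [← h, abs_mul, abs_of_pos ha]
    nlinarith
  linarith

lemma arith_aux (m n x y : ℤ) (hm : 1 ≤ m) (hn : 2 ≤ n)
    (h : (2*n + m*n^2)*x^2 + 2*(1+m*n)*x*y + (1+m)*y^2 = 1) : False := by
  have ha : 8 ≤ 2*n + m*n^2 := by nlinarith
  have hid : ((2*n+m*n^2)*x + (1+m*n)*y)^2 + (2*n+m*n^2-1)*y^2 = 2*n+m*n^2 := by
    linear_combination (2*n+m*n^2) * h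
  have hmn : 2 ≤ m*n := by nlinarith
  rcases lt_trichotomy y 0 with hy|rfl|hy
  · have hy1 : y ≤ -1 := by omega
    rcases eq_or_lt_of_le hy1 with hy2|hy2
    · -- y = -1
      subst hy2
      have hs : ((2*n+m*n^2)*x - (1+m*n) - 1) * ((2*n+m*n^2)*x - (1+m*n) + 1) = 0 := by
        linear_combination hid
      rcases mul_eq_zero.1 hs with hs|hs
      · refine small_aux (2*n+m*n^2) (2+m*n) x (by omega) ?_ (by linarith)
        rw [abs_of_nonneg (by linarith)]; nlinarith
      · refine small_aux (2*n+m*n^2) (m*n) x (by omega) ?_ (by linarith)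
        rw [abs_of_nonneg (by linarith)]; nlinarith
    · -- y ≤ -2
      have h4 : 4 ≤ y^2 := by nlinarith [sq_nonneg (y+2)]
      nlinarith [sq_nonneg ((2*n+m*n^2)*x + (1+m*n)*y)]
  · -- y = 0
    rcases eq_or_ne x 0 with rfl|hx
    · simp at h
    · have hxx : 1 ≤ x^2 := by rcases hx.lt_or_gt with h'|h' <;> nlinarith
      nlinarith
  · have hy1 : 1 ≤ y := hy
    rcases eq_or_lt_of_le hy1 with hy2|hy2
    · -- y = 1
      subst hy2
      have hs : ((2*n+m*n^2)*x + (1+m*n) - 1) * ((2*n+m*n^2)*x + (1+m*n) + 1) = 0 := by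
        linear_combination hid
      rcases mul_eq_zero.1 hs with hs|hs
      · refine small_aux (2*n+m*n^2) (-(m*n)) x (by omega) ?_ (by linarith)
        rw [abs_of_nonpos (by linarith)]; nlinarith
      · refine small_aux (2*n+m*n^2) (-(2+m*n)) x (by omega) ?_ (by linarith)
        rw [abs_of_nonpos (by linarith)]; nlinarith
    · -- y ≥ 2
      have h4 : 4 ≤ y^2 := by nlinarith [sq_nonneg (y-2)]
      nlinarith [sq_nonneg ((2*n+m*n^2)*x + (1+m*n)*y)]

theorem stmt_0 (m n : ℤ) (hm : 1 ≤ m) (hn : 2 ≤ n) :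
    ¬ ∃ P : Matrix (Fin 2) (Fin 2) ℤ, IsUnit P.det ∧
      Pᵀ * !![-2*n - m*n^2, 1; 1, -1] * P =
        !![-2*n - m*n^2, -1 - m*n; -1 - m*n, -1 - m] := by
  rintro ⟨P, hU, hP⟩
  have hinv : P * P⁻¹ = 1 := Matrix.mul_nonsing_inv P hU
  have h1 : (P⁻¹)ᵀ * Pᵀ = 1 := by rw [← transpose_mul, hinv, transpose_one]
  have hA : !![-2*n - m*n^2, 1; 1, -1] =
      (P⁻¹)ᵀ * !![-2*n - m*n^2, -1 - m*n; -1 - m*n, -1 - m] * P⁻¹ := by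
    rw [← hP]
    simp only [Matrix.mul_assoc]
    rw [hinv]
    simp only [Matrix.mul_one]
    simp only [← Matrix.mul_assoc]
    rw [h1, Matrix.one_mul]
  have key := congrFun (congrFun hA 1) 1
  simp [Matrix.mul_apply, Fin.sum_univ_two] at key
  refine arith_aux m n (P⁻¹ 0 1) (P⁻¹ 1 1) hm hn ?_
  linear_combination key
end

section
/- For integers m ≥ 1 and n ≥ 2, the symmetric bilinear form on ℤ² given by the matrix [[-2n - m n², -1 - m n], [-1 - m n, -1 - m]] contains no element of self-intersection -1; that is, there is no vector v = (x, y) ∈ ℤ² with vᵀ A v = -1, where A = [[-2n - m n², -1 - m n], [-1 - m n, -1 - m]]. -/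
open Matrix

theorem stmt_1 (m n : ℤ) (hm : 1 ≤ m) (hn : 2 ≤ n) :
    ¬ ∃ v : Fin 2 → ℤ,
      v ⬝ᵥ (!![-2*n - m*n^2, -1 - m*n; -1 - m*n, -1 - m]).mulVec v = -1 := by
  rintro ⟨v, h⟩
  simp [dotProduct, mulVec, Fin.sum_univ_two] at h
  set x := v 0 with hx0
  set y := v 1 with hy0
  have key : m*(n*x+y)^2 + (2*n-1)*x^2 + (x+y)^2 = 1 := by ring_nf; ring_nf at h; linarith
  rcases eq_or_ne x 0 with hx | hx
  · rw [hx] at key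
    rcases eq_or_ne y 0 with hy | hy
    · rw [hy] at key; norm_num at key
    · have h1 : 1 ≤ |y| := Int.one_le_abs hy
      have h2 : 1 ≤ y^2 := by nlinarith [sq_abs y]
      nlinarith [sq_nonneg y]
  · have h1 : 1 ≤ |x| := Int.one_le_abs hx
    have h2 : 1 ≤ x^2 := by nlinarith [sq_abs x]
    nlinarith [mul_nonneg (by linarith : (0:ℤ) ≤ m) (sq_nonneg (n*x+y)), sq_nonneg (x+y)]
end

section
/- For all integers m ≥ 1 and n ≥ 1, the symmetric bilinear form on ℤ³ given by the matrix [[-1, 0, 0], [0, -m, 1], [0, 1, 0]] is isomorphic over ℤ to the diagonal form ⟨1⟩ ⊕ ⟨-1⟩ ⊕ ⟨-1⟩. -/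
open Matrix

theorem stmt_4 (m n : ℤ) (hm : 1 ≤ m) (hn : 1 ≤ n) :
    ∃ P : Matrix (Fin 3) (Fin 3) ℤ, IsUnit P.det ∧
      Pᵀ * !![(-1 : ℤ), 0, 0; 0, -m, 1; 0, 1, 0] * P =
        !![(1 : ℤ), 0, 0; 0, -1, 0; 0, 0, -1] := by
  rcases Int.even_or_odd m with ⟨k, hk⟩ | ⟨k, hk⟩
  · refine ⟨!![1, 1, 1; 1, 1, 0; k + 1, k, 1], ?_, ?_⟩
    · rw [Matrix.det_fin_three]
      simp [Int.isUnit_iff]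
    · subst hk
      ext i j
      fin_cases i <;> fin_cases j <;>
        simp [Matrix.mul_apply, Fin.sum_univ_succ, Matrix.vecHead, Matrix.vecTail] <;> ring
  · refine ⟨!![0, 1, 0; 1, 0, 1; k + 1, 0, k], ?_, ?_⟩
    · rw [Matrix.det_fin_three]
      simp [Int.isUnit_iff]
    · subst hk
      ext i j
      fin_cases i <;> fin_cases j <;>
        simp [Matrix.mul_apply, Fin.sum_univ_succ, Matrix.vecHead, Matrix.vecTail] <;> ring
end

section
/- For all integers m ≥ 1 and n ≥ 2, the symmetric bilinear form on ℤ³ given by the matrix [[-2n - n²m, 1, 1], [1, 0, 0], [1, 0, -1]] is isomorphic over ℤ to the diagonal form ⟨1⟩ ⊕ ⟨-1⟩ ⊕ ⟨-1⟩. -/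
open Matrix

theorem stmt_5 (m n : ℤ) (hm : 1 ≤ m) (hn : 2 ≤ n) :
    ∃ P : Matrix (Fin 3) (Fin 3) ℤ, IsUnit P.det ∧
      Pᵀ * !![-2*n - n^2*m, 1, 1; 1, 0, 0; 1, 0, -1] * P =
        !![(1 : ℤ), 0, 0; 0, -1, 0; 0, 0, -1] := by
  obtain ⟨k, hk⟩ : ∃ k, m * (m + 1) = 2 * k := by
    rcases Int.even_mul_succ_self m with ⟨k, hk⟩
    exact ⟨k, by linarith⟩
  refine ⟨!![1, 1, 0; n + n^2*k, n + n^2*k - 1, n*m; n*m+1, n*m+1, 1], ?_, ?_⟩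
  · have hdet : (!![1, 1, 0; n + n^2*k, n + n^2*k - 1, n*m; n*m+1, n*m+1, 1] :
        Matrix (Fin 3) (Fin 3) ℤ).det = -1 := by
      simp [Matrix.det_fin_three]; ring
    rw [hdet]; exact ⟨-1, rfl⟩
  · ext i j
    fin_cases i <;> fin_cases j <;>
      simp [Matrix.mul_apply, Fin.sum_univ_three, Matrix.transpose_apply,
        Matrix.vecHead, Matrix.vecTail] <;>
      (first | linear_combination (-n^2 : ℤ) * hk | linear_combination (0 : ℤ) * hk)
end

section
/- For integers m ≥ 1 and n ≥ 2, the form given by the matrix [[-2n - m n², 1], [1, -1]] is indefinite if and only if m n² + 2n - 1 < 0, hence (given m ≥ 1, n ≥ 2) it is negative definite; nevertheless it represents -1 while the form [[-2n - m n², -1 - m n], [-1 - m n, -1 - m]] does not, so the two negative definite forms of equal rank and determinant are non-isomorphic. -/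
open Matrix

lemma quadval9 (a b c d : ℤ) (v : Fin 2 → ℤ) :
    v ⬝ᵥ (!![a, b; c, d]).mulVec v =
      a * v 0 ^ 2 + (b + c) * (v 0 * v 1) + d * v 1 ^ 2 := by
  simp [Matrix.mulVec, dotProduct, Fin.sum_univ_two]
  ring

lemma one_le_sq9 {a : ℤ} (h : a ≠ 0) : 1 ≤ a^2 := by
  rcases h.lt_or_gt with h | h <;> nlinarith

lemma conj9 (A P : Matrix (Fin 2) (Fin 2) ℤ) (v : Fin 2 → ℤ) :
    v ⬝ᵥ (Pᵀ * A * P).mulVec v = (P.mulVec v) ⬝ᵥ A.mulVec (P.mulVec v) := by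
  simp [Matrix.mulVec, dotProduct, Matrix.mul_apply, Fin.sum_univ_two,
    Matrix.transpose_apply]
  ring

theorem stmt_9 (m n : ℤ) (hm : 1 ≤ m) (hn : 2 ≤ n) :
    (((∃ v : Fin 2 → ℤ, 0 < v ⬝ᵥ (!![-2*n - m*n^2, 1; 1, -1]).mulVec v) ∧
      (∃ v : Fin 2 → ℤ, v ⬝ᵥ (!![-2*n - m*n^2, 1; 1, -1]).mulVec v < 0)) ↔
        m*n^2 + 2*n - 1 < 0) ∧
    (∀ v : Fin 2 → ℤ, v ≠ 0 →
        v ⬝ᵥ (!![-2*n - m*n^2, 1; 1, -1]).mulVec v < 0) ∧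
    (∃ v : Fin 2 → ℤ, v ⬝ᵥ (!![-2*n - m*n^2, 1; 1, -1]).mulVec v = -1) ∧
    (¬ ∃ v : Fin 2 → ℤ,
        v ⬝ᵥ (!![-2*n - m*n^2, -1 - m*n; -1 - m*n, -1 - m]).mulVec v = -1) ∧
    (¬ ∃ P : Matrix (Fin 2) (Fin 2) ℤ, IsUnit P.det ∧
        Pᵀ * !![-2*n - m*n^2, 1; 1, -1] * P =
          !![-2*n - m*n^2, -1 - m*n; -1 - m*n, -1 - m]) := by
  have hD : 7 ≤ m*n^2 + 2*n - 1 := by nlinarith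
  -- part 4
  have h4 : ¬ ∃ v : Fin 2 → ℤ,
      v ⬝ᵥ (!![-2*n - m*n^2, -1 - m*n; -1 - m*n, -1 - m]).mulVec v = -1 := by
    rintro ⟨v, hv⟩
    rw [quadval9] at hv
    have key : ((1+m) * v 1 + (1+m*n) * v 0)^2 + (m*n^2+2*n-1) * (v 0)^2 = 1 + m := by
      linear_combination (-(1+m)) * hv
    have hx : v 0 = 0 := by
      by_contra hx
      have h1 : 1 ≤ (v 0)^2 := one_le_sq9 hx
      have hD2 : m + 2 ≤ m*n^2 + 2*n - 1 := by
        nlinarith [mul_nonneg (by linarith : (0:ℤ) ≤ m) (by nlinarith : (0:ℤ) ≤ n^2 - 4)]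
      have hp : (m*n^2+2*n-1) * 1 ≤ (m*n^2+2*n-1) * (v 0)^2 :=
        mul_le_mul_of_nonneg_left h1 (by linarith)
      nlinarith [sq_nonneg ((1+m) * v 1 + (1+m*n) * v 0)]
    have hm0 : (1+m) ≠ 0 := by linarith
    have h2 : (1+m) * (v 1)^2 = 1 := by
      apply mul_left_cancel₀ hm0
      rw [hx] at key
      linear_combination key
    have hdvd : (1+m) ∣ 1 := ⟨(v 1)^2, h2.symm⟩
    have := Int.le_of_dvd one_pos hdvd
    linarith
  refine ⟨?_, ?_, ?_, h4, ?_⟩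
  · constructor
    · rintro ⟨⟨v, hv⟩, -⟩
      rw [quadval9] at hv
      exfalso
      nlinarith [sq_nonneg (v 1 - v 0), sq_nonneg (v 0)]
    · intro h
      exact absurd h (by linarith)
  · intro v hv
    rw [quadval9]
    have h01 : v 0 ≠ 0 ∨ v 1 ≠ 0 := by
      by_contra h
      push_neg at h
      apply hv
      funext i
      fin_cases i
      · exact h.1
      · exact h.2
    rcases h01 with h | h
    · have h1 : 1 ≤ (v 0)^2 := one_le_sq9 h
      nlinarith [sq_nonneg (v 1 - v 0)]
    · have h1 : 1 ≤ (v 1)^2 := one_le_sq9 h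
      rcases eq_or_ne (v 0) 0 with h0 | h0
      · rw [h0]; nlinarith
      · have h2 : 1 ≤ (v 0)^2 := one_le_sq9 h0
        nlinarith [sq_nonneg (v 1 - v 0)]
  · refine ⟨![0, 1], ?_⟩
    rw [quadval9]
    norm_num
  · rintro ⟨P, hP, hPAB⟩
    apply h4
    refine ⟨(P⁻¹).mulVec ![0, 1], ?_⟩
    have hPP : P * P⁻¹ = 1 := Matrix.mul_nonsing_inv P hP
    rw [← hPAB, conj9]
    have hv : P.mulVec ((P⁻¹).mulVec ![0, 1]) = ![0, 1] := by
      rw [Matrix.mulVec_mulVec, hPP, Matrix.one_mulVec]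
    rw [hv, quadval9]
    norm_num
end

section
/- For integers m ≥ 1, n ≥ 2 and all integers x, y, the quadratic form Q(x,y) = (-2n - m n²)x² + 2(-1 - m n)xy + (-1 - m)y² satisfies Q(x,y) ≤ -2 whenever (x,y) ≠ (0,0). -/
theorem stmt_13 (m n : ℤ) (hm : 1 ≤ m) (hn : 2 ≤ n) (x y : ℤ)
    (hxy : (x, y) ≠ (0, 0)) :
    (-2*n - m*n^2) * x^2 + 2 * (-1 - m*n) * x * y + (-1 - m) * y^2 ≤ -2 := by
  rcases eq_or_ne x 0 with hx | hx
  · subst hx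
    have hy : y ≠ 0 := by simpa using hxy
    have h1 : 1 ≤ y^2 := by have := sq_pos_of_ne_zero hy; omega
    nlinarith [sq_nonneg y]
  · have h1 : 1 ≤ x^2 := by have := sq_pos_of_ne_zero hx; omega
    nlinarith [sq_nonneg (x + y), sq_nonneg (n*x + y), mul_nonneg (sub_nonneg.2 hm) (sq_nonneg (n*x + y))]
end
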